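/- Let X be an Abelian Polish group and A a universally measurable subset of X that is not Haar-null. Then the difference set A − A = {a − b : a, b ∈ A} is a neighborhood of zero in X. -/

import Mathlib

open MeasureTheory Topology Pointwise
open Filter Set

/-- Haar-null set: some Borel probability measure vanishes on all translates of `A`. -/
def IsHaarNull {X : Type*} [TopologicalSpace X] [AddCommGroup X] [MeasurableSpace X]
    (A : Set X) : Prop :=
  ∃ μ : Measure X, IsProbabilityMeasure μ ∧ ∀ x : X, μ {y | y - x ∈ A} = 0

/-- Universally measurable set: null-measurable for every Borel probability measure. -/
def UniversallyMeasurable {X : Type*} [MeasurableSpace X] (A : Set X) : Prop :=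
  ∀ μ : Measure X, IsProbabilityMeasure μ → NullMeasurableSet A μ


abbrev CG : Type := ℕ → ZMod 2

noncomputable def nu : Measure CG := Measure.addHaarMeasure ⊤

instance : IsProbabilityMeasure nu := ⟨by
  have := Measure.addHaarMeasure_self (K₀ := (⊤ : TopologicalSpace.PositiveCompacts CG))
  simpa [nu] using this⟩

instance : nu.IsAddLeftInvariant := by unfold nu; infer_instance
instance : nu.Regular := by unfold nu; infer_instance

/-- cylinder determined by the first `N` coordinates -/
def cyl (N : ℕ) (v : Fin N → ZMod 2) : Set CG := {b | ∀ i : Fin N, b i.val = v i}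

lemma isOpen_cyl (N : ℕ) (v : Fin N → ZMod 2) : IsOpen (cyl N v) := by
  have : cyl N v = ⋂ i : Fin N, (fun b : CG => b i.val) ⁻¹' {v i} := by
    ext b; simp [cyl]
  rw [this]
  exact isOpen_iInter_of_finite fun i =>
    (continuous_apply (i : ℕ)).isOpen_preimage _ (isOpen_discrete _)

lemma measurableSet_cyl (N : ℕ) (v : Fin N → ZMod 2) : MeasurableSet (cyl N v) :=
  (isOpen_cyl N v).measurableSet

lemma exists_flip (E : Set CG) (hE : NullMeasurableSet E nu) (h0 : nu E ≠ 0) :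
    ∃ (N : ℕ) (ε : CG), ε ∈ E ∧ Pi.single N 1 + ε ∈ E := by
  classical
  obtain ⟨E', hE'sub, hE'meas, hE'ae⟩ := hE.exists_measurable_subset_ae_eq
  have hE'0 : nu E' ≠ 0 := by rwa [measure_congr hE'ae]
  -- a closed (hence compact) subset of positive measure
  obtain ⟨K, hKsub, hKclosed, hKlt⟩ :=
    hE'meas.exists_isClosed_lt_add (measure_ne_top nu E') (ENNReal.half_pos hE'0).ne'
  have hK0 : nu K ≠ 0 := by
    intro hz
    rw [hz, zero_add] at hKlt
    exact absurd hKlt (not_lt.2 ENNReal.half_le_self)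
  -- an open superset with measure < 2 * nu K
  obtain ⟨U, hKU, hUopen, hUlt⟩ :=
    Set.exists_isOpen_lt_of_lt K (nu K + nu K) (ENNReal.lt_add_right (measure_ne_top nu K) hK0)
  -- basic cylinder neighborhoods inside U
  have hcover : ∀ a : CG, ∃ n : ℕ, a ∈ K → ∀ b : CG, (∀ i < n, b i = a i) → b ∈ U := by
    intro a
    by_cases haK : a ∈ K
    · obtain ⟨I, u, hu, hsub⟩ := (isOpen_pi_iff.1 hUopen) a (hKU haK)
      refine ⟨I.sup id + 1, fun _ b hb => hsub fun i hi => ?_⟩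
      have : i < I.sup id + 1 := Nat.lt_succ_of_le (Finset.le_sup (f := id) hi)
      rw [hb i this]
      exact (hu i hi).2
    · exact ⟨0, fun h => absurd h haK⟩
  choose nn hnn using hcover
  -- finite subcover at a common level N
  have hKcpt : IsCompact K := hKclosed.isCompact
  have hVopen : ∀ a : CG, IsOpen {b : CG | ∀ i < nn a, b i = a i} := by
    intro a
    have : {b : CG | ∀ i < nn a, b i = a i}
        = ⋂ i ∈ {j : ℕ | j < nn a}, (fun b : CG => b i) ⁻¹' {a i} := by
      ext b; simp
    rw [this]
    exact (Set.finite_Iio _).isOpen_biInter fun i _ =>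
      (continuous_apply i).isOpen_preimage _ (isOpen_discrete _)
  obtain ⟨t, htK, htfin, htcov⟩ := hKcpt.elim_finite_subcover_image
    (b := K) (c := fun a => {b : CG | ∀ i < nn a, b i = a i})
    (fun a _ => hVopen a) (fun a ha => Set.mem_biUnion ha (fun i _ => rfl))
  set N := htfin.toFinset.sup nn with hN
  -- cylinders at level N meeting K are inside U
  have hTU : ∀ v : Fin N → ZMod 2, (K ∩ cyl N v).Nonempty → cyl N v ⊆ U := by
    rintro v ⟨a, haK, hav⟩ b hbv
    obtain ⟨a', ha't, ha'⟩ : ∃ a' ∈ t, ∀ i < nn a', a i = a' i := by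
      have := htcov haK
      simpa using this
    have hle : nn a' ≤ N := Finset.le_sup (htfin.mem_toFinset.2 ha't)
    refine hnn a' (htK ha't) b fun i hi => ?_
    have hiN : i < N := lt_of_lt_of_le hi hle
    rw [show b i = v ⟨i, hiN⟩ from hbv ⟨i, hiN⟩, ← hav ⟨i, hiN⟩, ha' i hi]
  -- pigeonhole: some cylinder has K-density > 1/2
  set T : Finset (Fin N → ZMod 2) :=
    Finset.univ.filter fun v => (K ∩ cyl N v).Nonempty with hT
  have hdisj : ∀ v w : Fin N → ZMod 2, v ≠ w → Disjoint (cyl N v) (cyl N w) := by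
    intro v w hvw
    rw [Set.disjoint_iff_inter_eq_empty]
    ext b
    simp only [Set.mem_inter_iff, cyl, Set.mem_setOf_eq, Set.mem_empty_iff_false, iff_false]
    rintro ⟨h1, h2⟩
    exact hvw (funext fun i => by rw [← h1 i, ← h2 i])
  have hKeq : nu K = ∑ v ∈ T, nu (K ∩ cyl N v) := by
    have hmeas2 : ∀ v ∈ T, MeasurableSet (K ∩ cyl N v) := fun v _ =>
      hKclosed.measurableSet.inter (measurableSet_cyl N v)
    have hd : (T : Set (Fin N → ZMod 2)).PairwiseDisjoint (fun v => K ∩ cyl N v) :=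
      fun v _ w _ hvw =>
        (hdisj v w hvw).mono Set.inter_subset_right Set.inter_subset_right
    rw [← measure_biUnion_finset hd hmeas2]
    congr 1
    apply Set.Subset.antisymm
    · intro a haK
      have hvT : (fun i : Fin N => a i) ∈ T := by
        simp only [hT, Finset.mem_filter, Finset.mem_univ, true_and]
        exact ⟨a, haK, fun i => rfl⟩
      exact Set.mem_biUnion hvT ⟨haK, fun i => rfl⟩
    · exact Set.iUnion₂_subset fun v _ => Set.inter_subset_left
  have hsumU : ∑ v ∈ T, nu (cyl N v) ≤ nu U := by
    rw [← measure_biUnion_finset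
      (fun v hv w hw hvw => hdisj v w hvw) (fun v _ => measurableSet_cyl N v)]
    apply measure_mono
    apply Set.iUnion₂_subset
    intro v hv
    exact hTU v (by simpa [hT] using hv)
  obtain ⟨v, hvT, hv⟩ : ∃ v ∈ T, nu (cyl N v) / 2 < nu (K ∩ cyl N v) := by
    by_contra hno
    push_neg at hno
    have h1 : nu K ≤ nu U / 2 := by
      calc nu K = ∑ v ∈ T, nu (K ∩ cyl N v) := hKeq
        _ ≤ ∑ v ∈ T, nu (cyl N v) / 2 := Finset.sum_le_sum hno
        _ = (∑ v ∈ T, nu (cyl N v)) / 2 := by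
              simp only [div_eq_mul_inv, ← Finset.sum_mul]
        _ ≤ nu U / 2 := by gcongr
    have : nu U < nu U := by
      calc nu U < nu K + nu K := hUlt
        _ ≤ nu U / 2 + nu U / 2 := add_le_add h1 h1
        _ = nu U := ENNReal.add_halves _
    exact absurd this (lt_irrefl _)
  -- the flip argument
  set F := K ∩ cyl N v with hF
  set τ : CG → CG := fun b => Pi.single N 1 + b with hτ
  have hτpre : nu (τ ⁻¹' F) = nu F := measure_preimage_add nu _ F
  have hpre_sub : τ ⁻¹' F ⊆ cyl N v := by
    intro b hb
    intro i
    have hne : (i : ℕ) ≠ N := Nat.ne_of_lt i.isLt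
    have h2 := hb.2 i
    simp only [hτ] at h2
    rwa [Pi.add_apply, Pi.single_eq_of_ne hne, zero_add] at h2
  have hFmeas : MeasurableSet F := hKclosed.measurableSet.inter (measurableSet_cyl N v)
  have hτmeas : Measurable τ := (continuous_const.add continuous_id).measurable
  have hne : (F ∩ τ ⁻¹' F).Nonempty := by
    rw [Set.nonempty_iff_ne_empty]
    intro hemp
    have hdisj2 : Disjoint F (τ ⁻¹' F) := Set.disjoint_iff_inter_eq_empty.2 hemp
    have : nu F + nu (τ ⁻¹' F) ≤ nu (cyl N v) := by
      rw [← measure_union hdisj2 (hτmeas hFmeas)]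
      exact measure_mono (Set.union_subset Set.inter_subset_right hpre_sub)
    rw [hτpre] at this
    have : nu (cyl N v) < nu (cyl N v) := by
      calc nu (cyl N v) = nu (cyl N v) / 2 + nu (cyl N v) / 2 := (ENNReal.add_halves _).symm
        _ < nu F + nu F := ENNReal.add_lt_add hv hv
        _ ≤ nu (cyl N v) := this
    exact absurd this (lt_irrefl _)
  obtain ⟨ε, hεF, hετ⟩ := hne
  exact ⟨N, ε, hE'sub (hKsub hεF.1), hE'sub (hKsub hετ.1)⟩

noncomputable def seqRec {X : Type*} (g : ∀ n : ℕ, (Fin n → X) → X) : ℕ → X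
  | n => g n fun i => seqRec g i
termination_by n => n
decreasing_by exact i.isLt

lemma seqRec_eq {X : Type*} (g : ∀ n : ℕ, (Fin n → X) → X) (n : ℕ) :
    seqRec g n = g n fun i => seqRec g i := by
  rw [seqRec]

/-- Christensen's theorem: if `A` is a universally measurable non-Haar-null subset of an
Abelian Polish group, then `A - A` is a neighborhood of zero. -/
theorem statement13 {X : Type*} [TopologicalSpace X] [AddCommGroup X] [IsTopologicalAddGroup X]
    [PolishSpace X] [MeasurableSpace X] [BorelSpace X]
    (A : Set X) (hA : UniversallyMeasurable A) (hAn : ¬ IsHaarNull A) :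
    A - A ∈ 𝓝 (0 : X) := by
  classical
  by_contra h
  letI := TopologicalSpace.upgradeIsCompletelyMetrizable X
  have hnotnhds : ∀ V : Set X, V ∈ 𝓝 (0 : X) → ∃ y ∈ V, y ∉ A - A := by
    intro V hV
    by_contra hc
    push_neg at hc
    exact h (Filter.mem_of_superset hV hc)
  -- selection of a rapidly convergent sequence outside A - A
  have hsel : ∀ (n : ℕ) (v : Fin n → X), ∃ y : X,
      y ∉ A - A ∧ ∀ F : Finset (Fin n),
        dist (∑ i ∈ F, v i) (∑ i ∈ F, v i + y) < (1 / 2 : ℝ) ^ n := by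
    intro n v
    have hopen : IsOpen {y : X | ∀ F : Finset (Fin n),
        dist (∑ i ∈ F, v i) (∑ i ∈ F, v i + y) < (1 / 2 : ℝ) ^ n} := by
      have heq : {y : X | ∀ F : Finset (Fin n),
          dist (∑ i ∈ F, v i) (∑ i ∈ F, v i + y) < (1 / 2 : ℝ) ^ n}
          = ⋂ F : Finset (Fin n),
            {y | dist (∑ i ∈ F, v i) (∑ i ∈ F, v i + y) < (1 / 2 : ℝ) ^ n} := by
        ext y; simp
      rw [heq]
      refine isOpen_iInter_of_finite fun F => ?_
      exact isOpen_lt (continuous_const.dist (continuous_const.add continuous_id))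
        continuous_const
    have hmem : (0 : X) ∈ {y : X | ∀ F : Finset (Fin n),
        dist (∑ i ∈ F, v i) (∑ i ∈ F, v i + y) < (1 / 2 : ℝ) ^ n} := by
      intro F
      simp only [add_zero, dist_self]
      positivity
    obtain ⟨y, hyV, hy⟩ := hnotnhds _ (hopen.mem_nhds hmem)
    exact ⟨y, hy, hyV⟩
  choose g hg1 hg2 using hsel
  set x : ℕ → X := seqRec g with hxdef
  have hgx : ∀ n, x n = g n fun i => x i := fun n => seqRec_eq g n
  have hx1 : ∀ n, x n ∉ A - A := fun n => by rw [hgx n]; exact hg1 n _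
  have hx2 : ∀ (n : ℕ) (F : Finset (Fin n)),
      dist (∑ i ∈ F, x i) (∑ i ∈ F, x i + x n) < (1 / 2 : ℝ) ^ n := by
    intro n F
    rw [hgx n]
    exact hg2 n _ F
  -- partial sums
  set P : ℕ → CG → X := fun n ε => ∑ i ∈ Finset.range n, if ε i = 1 then x i else 0 with hP
  have hPsucc : ∀ (ε : CG) (n : ℕ),
      P (n + 1) ε = P n ε + (if ε n = 1 then x n else 0) := fun ε n =>
    Finset.sum_range_succ _ n
  have hPsum : ∀ (ε : CG) (n : ℕ),
      P n ε = ∑ i ∈ Finset.univ.filter (fun i : Fin n => ε i = 1), x i := by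
    intro ε n
    rw [hP]
    simp only
    rw [← Fin.sum_univ_eq_sum_range (fun i => if ε i = 1 then x i else 0) n,
      Finset.sum_filter]
  have hstep : ∀ (ε : CG) (n : ℕ), dist (P n ε) (P (n + 1) ε) ≤ 1 * (1 / 2 : ℝ) ^ n := by
    intro ε n
    rw [one_mul, hPsucc]
    by_cases hε : ε n = 1
    · rw [if_pos hε, hPsum ε n]
      exact (hx2 n _).le
    · rw [if_neg hε, add_zero, dist_self]
      positivity
  have hcauchy : ∀ ε : CG, CauchySeq fun n => P n ε := fun ε =>
    cauchySeq_of_le_geometric (1 / 2) 1 (by norm_num) (hstep ε)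
  choose S hS using fun ε : CG => cauchySeq_tendsto_of_complete (hcauchy ε)
  have hdist : ∀ (ε : CG) (n : ℕ),
      dist (P n ε) (S ε) ≤ 1 * (1 / 2 : ℝ) ^ n / (1 - 1 / 2) := fun ε n =>
    dist_le_of_le_geometric_of_tendsto (1 / 2) 1 (by norm_num) (hstep ε) (hS ε) n
  have hPcont : ∀ n : ℕ, Continuous fun ε : CG => P n ε := by
    intro n
    apply continuous_finset_sum
    intro i _
    exact Continuous.comp (continuous_of_discreteTopology
      (f := fun b : ZMod 2 => if b = 1 then x i else 0)) (continuous_apply i)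
  have hScont : Continuous S := by
    refine TendstoUniformly.continuous (F := fun n (ε : CG) => P n ε) (p := atTop) ?_
      (Filter.Eventually.of_forall hPcont).frequently
    rw [Metric.tendstoUniformly_iff]
    intro δ hδ
    have hten : Tendsto (fun n : ℕ => 1 * (1 / 2 : ℝ) ^ n / (1 - 1 / 2)) atTop (𝓝 0) := by
      have h2 := (tendsto_pow_atTop_nhds_zero_of_lt_one (by norm_num : (0:ℝ) ≤ 1/2)
        (by norm_num : (1/2:ℝ) < 1))
      have h3 : Tendsto (fun n : ℕ => (1/2:ℝ) ^ n * (1 / (1 - 1/2))) atTop (𝓝 0) := by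
        simpa using h2.mul_const (1 / (1 - 1/2 : ℝ))
      refine h3.congr fun n => ?_
      field_simp
    filter_upwards [hten.eventually (gt_mem_nhds hδ)] with n hn ε
    calc dist (S ε) (P n ε) = dist (P n ε) (S ε) := dist_comm _ _
      _ ≤ 1 * (1 / 2 : ℝ) ^ n / (1 - 1 / 2) := hdist ε n
      _ < δ := hn
  have hSmeas : Measurable S := hScont.measurable
  have hprob : IsProbabilityMeasure (Measure.map S nu) :=
    Measure.isProbabilityMeasure_map hSmeas.aemeasurable
  apply hAn
  refine ⟨Measure.map S nu, hprob, fun t => ?_⟩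
  by_contra hμB
  set B : Set X := {y | y - t ∈ A} with hB
  have hBnull : NullMeasurableSet B (Measure.map S nu) := by
    have hft : Measurable fun y : X => y - t := measurable_id.sub measurable_const
    have hpm : IsProbabilityMeasure
        (Measure.map (fun y : X => y - t) (Measure.map S nu)) :=
      Measure.isProbabilityMeasure_map hft.aemeasurable
    exact (hA _ hpm).preimage ⟨hft, Measure.AbsolutelyContinuous.rfl⟩
  have hqmpS : Measure.QuasiMeasurePreserving S nu (Measure.map S nu) :=
    ⟨hSmeas, Measure.AbsolutelyContinuous.rfl⟩
  have hEnull : NullMeasurableSet (S ⁻¹' B) nu := hBnull.preimage hqmpS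
  have hE0 : nu (S ⁻¹' B) ≠ 0 := by
    rw [← Measure.map_apply₀ hSmeas.aemeasurable hBnull]
    exact hμB
  obtain ⟨N, ε, hε, hε'⟩ := exists_flip _ hEnull hE0
  -- the flip identity
  have hcase : ε N = 0 ∨ ε N = 1 := by
    have : ∀ a : ZMod 2, a = 0 ∨ a = 1 := by decide
    exact this _
  have hε'N : ∀ i : ℕ, i ≠ N → ((Pi.single N 1 + ε : CG)) i = ε i := by
    intro i hi
    rw [Pi.add_apply, Pi.single_eq_of_ne hi, zero_add]
  have hflip : S ((Pi.single N 1 + ε : CG)) = S ε + x N ∨ S ((Pi.single N 1 + ε : CG)) = S ε - x N := by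
    have hPn : ∀ c : X,
        (∀ i : ℕ, (if ((Pi.single N 1 + ε : CG)) i = 1 then x i else 0)
          = (if ε i = 1 then x i else 0) + (if i = N then c else 0)) →
        ∀ n : ℕ, N < n → P n ((Pi.single N 1 + ε : CG)) = P n ε + c := by
      intro c hterm n hn
      rw [hP]
      simp only
      rw [Finset.sum_congr rfl fun i _ => hterm i, Finset.sum_add_distrib,
        Finset.sum_ite_eq' (Finset.range n) N fun _ => c,
        if_pos (Finset.mem_range.2 hn)]
    rcases hcase with h0 | h1
    · left
      have hterm : ∀ i : ℕ, (if ((Pi.single N 1 + ε : CG)) i = 1 then x i else 0)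
          = (if ε i = 1 then x i else 0) + (if i = N then x N else 0) := by
        intro i
        by_cases hi : i = N
        · subst hi
          rw [Pi.add_apply, Pi.single_eq_same, h0]
          have h10 : (1 + 0 : ZMod 2) = 1 := by decide
          have h01 : (0 : ZMod 2) ≠ 1 := by decide
          rw [if_pos h10, if_neg h01, if_pos rfl, zero_add]
        · rw [hε'N i hi, if_neg hi, add_zero]
      have t2 : Tendsto (fun n => P n ε + x N) atTop (𝓝 (S ε + x N)) :=
        (hS ε).add tendsto_const_nhds
      refine tendsto_nhds_unique_of_eventuallyEq (hS _) t2 ?_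
      filter_upwards [eventually_gt_atTop N] with n hn
      exact hPn (x N) hterm n hn
    · right
      have hterm : ∀ i : ℕ, (if ((Pi.single N 1 + ε : CG)) i = 1 then x i else 0)
          = (if ε i = 1 then x i else 0) + (if i = N then -x N else 0) := by
        intro i
        by_cases hi : i = N
        · subst hi
          rw [Pi.add_apply, Pi.single_eq_same, h1]
          have h11 : (1 + 1 : ZMod 2) ≠ 1 := by decide
          have h00 : (1 : ZMod 2) = 1 := rfl
          rw [if_neg h11, if_pos h00, if_pos rfl, add_neg_cancel]
        · rw [hε'N i hi, if_neg hi, add_zero]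
      have t2 : Tendsto (fun n => P n ε + -x N) atTop (𝓝 (S ε + -x N)) :=
        (hS ε).add tendsto_const_nhds
      rw [← sub_eq_add_neg] at t2
      refine tendsto_nhds_unique_of_eventuallyEq (hS _) t2 ?_
      filter_upwards [eventually_gt_atTop N] with n hn
      exact hPn (-x N) hterm n hn
  have h1 : S ε - t ∈ A := hε
  have h2 : S ((Pi.single N 1 + ε : CG)) - t ∈ A := hε'
  apply hx1 N
  rcases hflip with hfe | hfe
  · have key := Set.sub_mem_sub h2 h1
    have heq : (S ((Pi.single N 1 + ε : CG)) - t) - (S ε - t) = x N := by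
      rw [hfe]; abel
    rwa [heq] at key
  · have key := Set.sub_mem_sub h1 h2
    have heq : (S ε - t) - (S ((Pi.single N 1 + ε : CG)) - t) = x N := by
      rw [hfe]; abel
    rwa [heq] at key
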